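/- With the notation of the $n$-fold cover of $\mathrm{Sp}_{2r}$ with $4 \mid n$ (so $n = 2m$, $m$ even, $Y = \mathbb{Z}^r$, $Y_{Q,n} = m\mathbb{Z}^r$, $Y_{Q,n}^{sc}$ as above), the cover is persistent: for every $y \in Y$, the stabilizer of the image of $y$ in $Y/Y_{Q,n}^{sc}$ under the twisted Weyl action $w[y] = w(y - \rho^\vee) + \rho^\vee$ equals the stabilizer of the image of $y$ in $Y/Y_{Q,n}$. -/

import Mathlib

open scoped BigOperators

/-- Standard basis vector of `ℚ^r`. -/
def stdE (r : ℕ) (i : Fin r) : Fin r → ℚ := fun k => if k = i then 1 else 0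

/-- Simple coroots of type `C_r` in `ℚ^r`: `α_i^∨ = e_i - e_{i+1}` (`i < r`),
`α_r^∨ = e_r`. -/
def simpleCorootC (r : ℕ) (i : Fin r) : Fin r → ℚ :=
  if h : (i : ℕ) + 1 < r then stdE r i - stdE r ⟨(i : ℕ) + 1, h⟩ else stdE r i

/-- The Weyl group of type `C_r` consists of all signed permutations; the pair
`(σ, ε)` acts on `ℚ^r` by permuting the coordinates by `σ` and changing the signs
indicated by `ε`. -/
def signedPerm (r : ℕ) (σ : Equiv.Perm (Fin r)) (ε : Fin r → Bool)
    (y : Fin r → ℚ) : Fin r → ℚ :=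
  fun i => (if ε i then (-1 : ℚ) else 1) * y (σ.symm i)

/-- `ρ^∨`, the half-sum of the positive coroots of `C_r`. -/
def rhoCheckC (r : ℕ) : Fin r → ℚ := fun i => (r : ℚ) - (i : ℕ) - 1/2

/-- The twisted Weyl action `w[y] = w(y - ρ^∨) + ρ^∨`. -/
def twistedC (r : ℕ) (σ : Equiv.Perm (Fin r)) (ε : Fin r → Bool)
    (y : Fin r → ℚ) : Fin r → ℚ :=
  signedPerm r σ ε (y - rhoCheckC r) + rhoCheckC r

/-- `Y_{Q,n} = mℤ^r` (`n = 2m`), realized inside `ℚ^r`. -/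
def YQnC (r m : ℕ) : Set (Fin r → ℚ) := {v | ∀ i, ∃ c : ℤ, v i = (m : ℚ) * c}

/-- `Y_{Q,n}^{sc}` (`n = 2m`), the sublattice spanned by `m·α_i^∨` for `i < r`
and `n·α_r^∨ = 2m·α_r^∨`, realized inside `ℚ^r`. -/
def YQnscC (r m : ℕ) : AddSubgroup (Fin r → ℚ) :=
  AddSubgroup.closure
    {v | ∃ i : Fin r,
      v = (if (i : ℕ) + 1 < r then (m : ℚ) else 2 * m) • simpleCorootC r i}

lemma keyLemma {α : Type*} [Fintype α] [DecidableEq α] (N : ℤ) (h4 : 4 ∣ N)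
    (σ : Equiv.Perm α) :
    ∀ K : ℕ, ∀ s : α → Bool, ∀ a : α → ℤ,
      (Finset.univ.filter (fun i => s i = true)).card = K →
      (∀ i, Odd (a i)) →
      (∀ i, N ∣ ((if s i then -1 else 1) * a (σ⁻¹ i) - a i)) →
      N ∣ ∑ i ∈ Finset.univ.filter (fun i => s i = true), a (σ⁻¹ i) := by
  intro K
  induction K using Nat.strong_induction_on with
  | _ K ih =>
    intro s a hcard hodd hrel
    rcases Finset.eq_empty_or_nonempty (Finset.univ.filter (fun i => s i = true)) with hF | hF
    · rw [hF]; simp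
    obtain ⟨i₀, hi₀⟩ := hF
    have hsi₀ : s i₀ = true := by simpa using (Finset.mem_filter.mp hi₀).2
    -- find the next flip along the cycle
    have hex : ∃ t : ℕ, 1 ≤ t ∧ s ((σ ^ t) i₀) = true := by
      refine ⟨orderOf σ, orderOf_pos σ, ?_⟩
      rw [pow_orderOf_eq_one]; simpa using hsi₀
    set t₀ := Nat.find hex with ht₀def
    obtain ⟨ht₀pos, hst₀⟩ := Nat.find_spec hex
    have hmin : ∀ u, 1 ≤ u → u < t₀ → s ((σ ^ u) i₀) = false := by
      intro u hu1 hu2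
      have := Nat.find_min hex hu2
      simp only [not_and] at this
      simpa using fun h => (this hu1 h)
    set i₁ := (σ ^ t₀) i₀ with hi₁def
    -- the chain of congruences between consecutive flips
    have chain : ∀ u, u < t₀ → N ∣ a ((σ ^ u) i₀) + a (σ⁻¹ i₀) := by
      intro u
      induction u with
      | zero =>
        intro _
        have h0 := hrel i₀
        rw [hsi₀] at h0
        simp only [if_true] at h0
        have h1 : N ∣ -(-1 * a (σ⁻¹ i₀) - a i₀) := dvd_neg.mpr h0
        simpa [pow_zero, add_comm] using h1
      | succ u ihu =>
        intro hu
        have hu' : u < t₀ := Nat.lt_of_succ_lt hu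
        have h1 := ihu hu'
        have hfalse : s ((σ ^ (u+1)) i₀) = false := hmin (u+1) (Nat.succ_le_succ (Nat.zero_le u)) hu
        have h2 := hrel ((σ ^ (u+1)) i₀)
        rw [hfalse] at h2
        simp only [Bool.false_eq_true, if_false, one_mul] at h2
        have happ : σ⁻¹ ((σ ^ (u+1)) i₀) = (σ ^ u) i₀ := by
          have h3 : (σ ^ (u+1)) i₀ = σ ((σ ^ u) i₀) := by
            rw [pow_succ']; rfl
          rw [h3, Equiv.Perm.inv_def, Equiv.symm_apply_apply]
        rw [happ] at h2
        have h4' := dvd_sub h1 h2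
        have heq : a ((σ ^ u) i₀) + a (σ⁻¹ i₀) - (a ((σ ^ u) i₀) - a ((σ ^ (u+1)) i₀))
            = a ((σ ^ (u+1)) i₀) + a (σ⁻¹ i₀) := by ring
        rwa [heq] at h4'
    have hpair : N ∣ a (σ⁻¹ i₁) + a (σ⁻¹ i₀) := by
      have h1 := chain (t₀ - 1) (Nat.sub_lt ht₀pos one_pos)
      have h2 : σ⁻¹ i₁ = (σ ^ (t₀ - 1)) i₀ := by
        rw [hi₁def]
        have h3 : (σ ^ t₀) i₀ = σ ((σ ^ (t₀ - 1)) i₀) := by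
          conv_lhs => rw [show t₀ = (t₀ - 1) + 1 from (Nat.succ_pred_eq_of_pos ht₀pos).symm]
          rw [pow_succ']; rfl
        rw [h3, Equiv.Perm.inv_def, Equiv.symm_apply_apply]
      rw [h2]; exact h1
    by_cases hii : i₁ = i₀
    · -- single flip in cycle: contradiction with oddness
      exfalso
      rw [hii] at hpair
      have h2a : N ∣ 2 * a (σ⁻¹ i₀) := by rw [two_mul]; exact hpair
      obtain ⟨w, hw⟩ := dvd_trans h4 h2a
      obtain ⟨k, hk⟩ := hodd (σ⁻¹ i₀)
      omega
    -- two distinct consecutive flips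
    have hstar : ∀ u, 1 ≤ u → u ≤ t₀ → (σ ^ u) i₀ ≠ i₀ := by
      intro u hu1 hu2 heq
      have htr : s ((σ ^ u) i₀) = true := by rw [heq]; exact hsi₀
      rcases lt_or_eq_of_le hu2 with h | h
      · rw [hmin u hu1 h] at htr; exact Bool.false_ne_true htr
      · rw [h] at heq; exact hii heq
    set S : Finset α := (Finset.range t₀).image (fun u => (σ ^ u) i₀) with hSdef
    have hmemS : ∀ x, x ∈ S ↔ ∃ u, u < t₀ ∧ (σ ^ u) i₀ = x := by
      intro x
      simp [hSdef, Finset.mem_image, Finset.mem_range]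
    have hi₀S : i₀ ∈ S := (hmemS i₀).mpr ⟨0, ht₀pos, rfl⟩
    have hpowfix : ∀ u w : ℕ, (σ ^ w) ((σ ^ u) i₀) = (σ ^ u) i₀ → (σ ^ w) i₀ = i₀ := by
      intro u w h
      have hcomm : (σ ^ u) ((σ ^ w) i₀) = (σ ^ w) ((σ ^ u) i₀) := by
        rw [← Equiv.Perm.mul_apply, ← Equiv.Perm.mul_apply, ← pow_add, ← pow_add, Nat.add_comm]
      rw [h] at hcomm
      exact (σ ^ u).injective hcomm
    have hi₁S : i₁ ∉ S := by
      intro h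
      obtain ⟨u, hu, heq⟩ := (hmemS i₁).mp h
      have h1 : (σ ^ (t₀ - u)) ((σ ^ u) i₀) = (σ ^ u) i₀ := by
        rw [← Equiv.Perm.mul_apply, ← pow_add, Nat.sub_add_cancel (le_of_lt hu), ← hi₁def, heq]
      have h2 := hpowfix u (t₀ - u) h1
      exact hstar (t₀ - u) (by omega) (by omega) h2
    have hinvi₀ : σ⁻¹ i₀ ∉ S := by
      intro h
      obtain ⟨u, hu, heq⟩ := (hmemS (σ⁻¹ i₀)).mp h
      have h1 : (σ ^ (u+1)) i₀ = i₀ := by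
        rw [pow_succ']
        show σ ((σ ^ u) i₀) = i₀
        rw [heq, Equiv.Perm.inv_def, Equiv.apply_symm_apply]
      exact hstar (u+1) (by omega) (by omega) h1
    have hinvi₁ : σ⁻¹ i₁ ∈ S := by
      refine (hmemS _).mpr ⟨t₀ - 1, Nat.sub_lt ht₀pos one_pos, ?_⟩
      have h3 : (σ ^ t₀) i₀ = σ ((σ ^ (t₀ - 1)) i₀) := by
        conv_lhs => rw [show t₀ = (t₀ - 1) + 1 from (Nat.succ_pred_eq_of_pos ht₀pos).symm]
        rw [pow_succ']; rfl
      rw [hi₁def, h3, Equiv.Perm.inv_def, Equiv.symm_apply_apply]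
    have hnotS : ∀ i, s i = true → i ≠ i₁ → σ⁻¹ i ∉ S := by
      intro i hsi hne1 h
      obtain ⟨u, hu, heq⟩ := (hmemS (σ⁻¹ i)).mp h
      have hieq : (σ ^ (u+1)) i₀ = i := by
        rw [pow_succ']
        show σ ((σ ^ u) i₀) = i
        rw [heq, Equiv.Perm.inv_def, Equiv.apply_symm_apply]
      rcases lt_or_eq_of_le (Nat.succ_le_of_lt hu) with h' | h'
      · have h2 := hmin (u+1) (by omega) h'
        rw [hieq, hsi] at h2; simp at h2
      · rw [show u + 1 = t₀ from h', ← hi₁def] at hieq; exact hne1 hieq.symm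
    have hSmem_not_flip : ∀ i, i ∈ S → i ≠ i₀ → s i = false ∧ σ⁻¹ i ∈ S := by
      intro i hiS hne
      obtain ⟨u, hu, heq⟩ := (hmemS i).mp hiS
      have hu1 : 1 ≤ u := by
        rcases Nat.eq_zero_or_pos u with h | h
        · exfalso; apply hne; rw [← heq, h, pow_zero]; simp
        · exact h
      constructor
      · rw [← heq]; exact hmin u hu1 hu
      · refine (hmemS _).mpr ⟨u - 1, by omega, ?_⟩
        rw [← heq]
        have h3 : (σ ^ u) i₀ = σ ((σ ^ (u - 1)) i₀) := by
          conv_lhs => rw [show u = (u - 1) + 1 from (Nat.succ_pred_eq_of_pos hu1).symm]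
          rw [pow_succ']; rfl
        rw [h3, Equiv.Perm.inv_def, Equiv.symm_apply_apply]
    -- the modified data
    set s' : α → Bool := fun i => if i = i₀ ∨ i = i₁ then false else s i with hs'def
    set a' : α → ℤ := fun i => if i ∈ S then -a i else a i with ha'def
    have hodd' : ∀ i, Odd (a' i) := by
      intro i; simp only [ha'def]
      split
      · exact (hodd i).neg
      · exact hodd i
    have hi₁ne : i₁ ≠ i₀ := hii
    have hrel' : ∀ i, N ∣ ((if s' i then -1 else 1) * a' (σ⁻¹ i) - a' i) := by
      intro i
      by_cases h0 : i = i₀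
      · rw [h0]
        have hs'0 : s' i₀ = false := by simp [hs'def]
        have ha'1 : a' (σ⁻¹ i₀) = a (σ⁻¹ i₀) := by simp only [ha'def]; rw [if_neg hinvi₀]
        have ha'2 : a' i₀ = -a i₀ := by simp [ha'def, hi₀S]
        rw [hs'0, ha'1, ha'2]
        simp only [Bool.false_eq_true, if_false, one_mul, sub_neg_eq_add]
        have hc := chain 0 ht₀pos
        rw [pow_zero] at hc
        simpa [add_comm] using hc
      by_cases h1 : i = i₁
      · rw [h1]
        have hs'0 : s' i₁ = false := by simp [hs'def]
        have ha'1 : a' (σ⁻¹ i₁) = -a (σ⁻¹ i₁) := by simp only [ha'def]; rw [if_pos hinvi₁]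
        have ha'2 : a' i₁ = a i₁ := by simp [ha'def, hi₁S]
        rw [hs'0, ha'1, ha'2]
        simp only [Bool.false_eq_true, if_false, one_mul]
        have h2 := hrel i₁
        rw [hst₀] at h2
        simp only [if_true] at h2
        have heq : -a (σ⁻¹ i₁) - a i₁ = -1 * a (σ⁻¹ i₁) - a i₁ := by ring
        rw [heq]; exact h2
      by_cases hS : i ∈ S
      · obtain ⟨hsfalse, hinvS⟩ := hSmem_not_flip i hS h0
        have hs'0 : s' i = false := by simp [hs'def, h0, h1, hsfalse]
        have ha'1 : a' (σ⁻¹ i) = -a (σ⁻¹ i) := by simp only [ha'def]; rw [if_pos hinvS]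
        have ha'2 : a' i = -a i := by simp [ha'def, hS]
        rw [hs'0, ha'1, ha'2]
        simp only [Bool.false_eq_true, if_false, one_mul]
        have h2 := hrel i
        rw [hsfalse] at h2
        simp only [Bool.false_eq_true, if_false, one_mul] at h2
        have heq : -a (σ⁻¹ i) - -a i = -(a (σ⁻¹ i) - a i) := by ring
        rw [heq]; exact dvd_neg.mpr h2
      · -- i ∉ S, i ≠ i₀, i ≠ i₁
        have hs'0 : s' i = s i := by simp [hs'def, h0, h1]
        have ha'2 : a' i = a i := by simp [ha'def, hS]
        have hinvS : σ⁻¹ i ∉ S := by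
          intro h
          obtain ⟨u, hu, heq⟩ := (hmemS (σ⁻¹ i)).mp h
          have hieq : (σ ^ (u+1)) i₀ = i := by
            rw [pow_succ']
            show σ ((σ ^ u) i₀) = i
            rw [heq, Equiv.Perm.inv_def, Equiv.apply_symm_apply]
          rcases lt_or_eq_of_le (Nat.succ_le_of_lt hu) with h' | h'
          · exact hS ((hmemS i).mpr ⟨u+1, h', hieq⟩)
          · rw [show u + 1 = t₀ from h', ← hi₁def] at hieq; exact h1 hieq.symm
        have ha'1 : a' (σ⁻¹ i) = a (σ⁻¹ i) := by simp only [ha'def]; rw [if_neg hinvS]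
        rw [hs'0, ha'1, ha'2]
        exact hrel i
    -- the new flip set
    set F := Finset.univ.filter (fun i => s i = true) with hFdef
    set F' := Finset.univ.filter (fun i => s' i = true) with hF'def
    have hF'eq : F' = (F.erase i₀).erase i₁ := by
      ext x
      simp only [hF'def, hFdef, Finset.mem_filter, Finset.mem_univ, true_and,
        Finset.mem_erase, hs'def]
      constructor
      · intro hx
        by_cases hx0 : x = i₀ ∨ x = i₁
        · rw [if_pos hx0] at hx; exact absurd hx Bool.false_ne_true
        · rw [if_neg hx0] at hx
          push_neg at hx0
          exact ⟨hx0.2, hx0.1, hx⟩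
      · rintro ⟨hx1, hx0, hx⟩
        rw [if_neg (by tauto)]; exact hx
    have hi₁F : i₁ ∈ F.erase i₀ := by
      simp only [Finset.mem_erase, hFdef, Finset.mem_filter, Finset.mem_univ, true_and]
      exact ⟨hi₁ne, hst₀⟩
    have hcard' : F'.card = K - 2 := by
      rw [hF'eq, Finset.card_erase_of_mem hi₁F, Finset.card_erase_of_mem hi₀, hcard]
      omega
    have hK2 : 2 ≤ K := by
      have h1 : 0 < (F.erase i₀).card := Finset.card_pos.mpr ⟨i₁, hi₁F⟩
      have h2 := Finset.card_erase_of_mem hi₀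
      rw [hcard] at h2
      omega
    have hIH := ih (K - 2) (by omega) s' a' hcard' hodd' hrel'
    rw [← hF'def] at hIH
    -- a' agrees with a on σ⁻¹ of F'
    have hagree : ∀ i ∈ F', a' (σ⁻¹ i) = a (σ⁻¹ i) := by
      intro i hi
      rw [hF'eq] at hi
      simp only [Finset.mem_erase, hFdef, Finset.mem_filter, Finset.mem_univ, true_and] at hi
      obtain ⟨hne1, hne0, hsi⟩ := hi
      have := hnotS i hsi hne1
      simp only [ha'def]; rw [if_neg this]
    have hIH' : N ∣ ∑ i ∈ F', a (σ⁻¹ i) := by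
      rwa [Finset.sum_congr rfl hagree] at hIH
    -- decompose the sum
    have hFeq : F = insert i₀ (insert i₁ F') := by
      rw [hF'eq]
      rw [Finset.insert_erase hi₁F, Finset.insert_erase hi₀]
    have hi₀notin : i₀ ∉ insert i₁ F' := by
      simp only [Finset.mem_insert, hF'eq, Finset.mem_erase]
      push_neg
      refine ⟨fun h => hi₁ne h.symm, fun _ h => absurd rfl h⟩
    have hi₁notin : i₁ ∉ F' := by
      rw [hF'eq]; simp
    rw [hFdef] at *
    rw [hFeq, Finset.sum_insert hi₀notin, Finset.sum_insert hi₁notin]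
    have : a (σ⁻¹ i₀) + (a (σ⁻¹ i₁) + ∑ i ∈ F', a (σ⁻¹ i))
        = (a (σ⁻¹ i₁) + a (σ⁻¹ i₀)) + ∑ i ∈ F', a (σ⁻¹ i) := by ring
    rw [this]
    exact dvd_add hpair hIH'

/-- The subgroup of vectors `m·z` with `∑ z` even. -/
def scCond (r m : ℕ) : AddSubgroup (Fin r → ℚ) where
  carrier := {v | ∃ z : Fin r → ℤ, (∀ i, v i = (m : ℚ) * z i) ∧ ∃ d : ℤ, ∑ i, z i = 2 * d}
  zero_mem' := ⟨0, by simp, 0, by simp⟩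
  add_mem' := by
    rintro u v ⟨zu, hu, du, hdu⟩ ⟨zv, hv, dv, hdv⟩
    refine ⟨zu + zv, fun i => ?_, du + dv, ?_⟩
    · simp only [Pi.add_apply, hu i, hv i]
      push_cast; ring
    · simp only [Pi.add_apply]
      rw [Finset.sum_add_distrib, hdu, hdv]; ring
  neg_mem' := by
    rintro v ⟨z, hz, d, hd⟩
    refine ⟨-z, fun i => ?_, -d, ?_⟩
    · simp only [Pi.neg_apply, hz i]
      push_cast; ring
    · simp only [Pi.neg_apply]
      rw [Finset.sum_neg_distrib, hd]; ring

lemma sc_le_cond (r m : ℕ) : YQnscC r m ≤ scCond r m := by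
  rw [YQnscC, AddSubgroup.closure_le]
  rintro v ⟨i, rfl⟩
  by_cases h : (i : ℕ) + 1 < r
  · rw [if_pos h, simpleCorootC, dif_pos h]
    have hne : i ≠ (⟨(i : ℕ) + 1, h⟩ : Fin r) := by
      intro hh
      have := congrArg Fin.val hh
      simp at this
    refine ⟨fun k => if k = i then 1 else if k = ⟨(i : ℕ) + 1, h⟩ then -1 else 0,
      fun k => ?_, 0, ?_⟩
    · simp only [Pi.smul_apply, smul_eq_mul, Pi.sub_apply, stdE]
      split_ifs with h1 h2
      · exfalso; rw [h1] at h2; exact hne h2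
      · push_cast; ring
      · push_cast; ring
      · push_cast; ring
    · have hsplit : ∀ k : Fin r,
          (if k = i then (1 : ℤ) else if k = ⟨(i : ℕ) + 1, h⟩ then -1 else 0)
          = (if k = i then (1 : ℤ) else 0) + (if k = ⟨(i : ℕ) + 1, h⟩ then -1 else 0) := by
        intro k
        split_ifs with h1 h2
        · exfalso; rw [h1] at h2; exact hne h2
        · ring
        · ring
        · ring
      rw [Finset.sum_congr rfl (fun k _ => hsplit k), Finset.sum_add_distrib]
      simp [Finset.sum_ite_eq']
  · rw [if_neg h, simpleCorootC, dif_neg h]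
    refine ⟨fun k => if k = i then 2 else 0, fun k => ?_, 1, ?_⟩
    · simp only [Pi.smul_apply, smul_eq_mul, stdE]
      split_ifs <;> push_cast <;> ring
    · simp [Finset.sum_ite_eq']

lemma cond_le_sc (r m : ℕ) (hr : 0 < r) : (scCond r m : Set (Fin r → ℚ)) ⊆ YQnscC r m := by
  rintro v ⟨z, hz, d, hd⟩
  set last : Fin r := ⟨r - 1, by omega⟩ with hlast
  have hlastgen : ((2 * m : ℚ)) • stdE r last ∈ YQnscC r m := by
    apply AddSubgroup.subset_closure
    refine ⟨last, ?_⟩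
    have hnl : ¬((last : ℕ) + 1 < r) := by simp [hlast]; omega
    rw [if_neg hnl, simpleCorootC, dif_neg hnl]
  have tel : ∀ j : ℕ, ∀ i : Fin r, (i : ℕ) + j = r - 1 →
      (m : ℚ) • (stdE r i - stdE r last) ∈ YQnscC r m := by
    intro j
    induction j with
    | zero =>
      intro i hi
      have : i = last := Fin.ext (by simpa using hi)
      rw [this, sub_self, smul_zero]
      exact zero_mem _
    | succ j ihj =>
      intro i hi
      have h1 : (i : ℕ) + 1 < r := by omega
      have gen : (m : ℚ) • (stdE r i - stdE r ⟨(i : ℕ) + 1, h1⟩) ∈ YQnscC r m := by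
        apply AddSubgroup.subset_closure
        refine ⟨i, ?_⟩
        rw [if_pos h1, simpleCorootC, dif_pos h1]
      have h2 := ihj ⟨(i : ℕ) + 1, h1⟩ (by simp; omega)
      have heq : (m : ℚ) • (stdE r i - stdE r last)
          = (m : ℚ) • (stdE r i - stdE r ⟨(i : ℕ) + 1, h1⟩)
            + (m : ℚ) • (stdE r ⟨(i : ℕ) + 1, h1⟩ - stdE r last) := by
        rw [← smul_add, sub_add_sub_cancel]
      rw [heq]
      exact add_mem gen h2
  have mem_all : ∀ i : Fin r, (m : ℚ) • (stdE r i - stdE r last) ∈ YQnscC r m := by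
    intro i
    exact tel (r - 1 - (i : ℕ)) i (by omega)
  have hvid : v = (∑ i, z i • ((m : ℚ) • (stdE r i - stdE r last)))
      + d • ((2 * (m : ℚ)) • stdE r last) := by
    funext k
    simp only [Pi.add_apply, Finset.sum_apply, Pi.smul_apply, Pi.sub_apply, stdE]
    simp only [smul_eq_mul, zsmul_eq_mul]
    rw [hz k]
    have hterm : ∀ i : Fin r, (z i : ℚ) * ((m : ℚ) * ((if k = i then (1:ℚ) else 0) - (if k = last then (1:ℚ) else 0)))
        = (if k = i then (m : ℚ) * (z i : ℚ) else 0) - (if k = last then (m : ℚ) * (z i : ℚ) else 0) := by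
      intro i
      split_ifs <;> ring
    rw [Finset.sum_congr rfl (fun i _ => hterm i), Finset.sum_sub_distrib]
    rw [Finset.sum_ite_eq]
    by_cases hk : k = last
    · simp only [hk, if_pos (Finset.mem_univ _), if_true, ← Finset.mul_sum]
      have hcast : (∑ i, ((z i : ℚ))) = ((2 * d : ℤ) : ℚ) := by
        rw [← hd]; push_cast; ring
      rw [hcast]
      push_cast
      ring
    · simp only [if_pos (Finset.mem_univ _), if_neg hk]
      simp
  rw [hvid]
  exact add_mem (AddSubgroup.sum_mem _ (fun i _ => AddSubgroup.zsmul_mem _ (mem_all i) _)) (AddSubgroup.zsmul_mem _ hlastgen _)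

/-- For the `n`-fold cover of `Sp_{2r}` with `4 ∣ n` (so `n = 2m`
with `m` even), the cover is persistent: for every `y` in the cocharacter lattice
`Y = ℤ^r`, the stabilizer of `y` modulo `Y_{Q,n}^{sc}` under the twisted Weyl action
`w[y] = w(y-ρ^∨)+ρ^∨` equals its stabilizer modulo `Y_{Q,n}`. -/
theorem statement5 (r m : ℕ) (hr : 0 < r) (hm : 0 < m) (hmeven : Even m) :
    ∀ y : Fin r → ℚ, (∀ i, ∃ z : ℤ, y i = (z : ℚ)) →
      {p : Equiv.Perm (Fin r) × (Fin r → Bool) |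
          twistedC r p.1 p.2 y - y ∈ (YQnscC r m : Set (Fin r → ℚ))}
        = {p : Equiv.Perm (Fin r) × (Fin r → Bool) |
            twistedC r p.1 p.2 y - y ∈ YQnC r m} := by
  intro y hy
  choose zy hzy using hy
  ext p
  obtain ⟨σ, ε⟩ := p
  simp only [Set.mem_setOf_eq]
  constructor
  · intro h
    obtain ⟨z, hz, -⟩ := sc_le_cond r m h
    intro i
    exact ⟨z i, hz i⟩
  · intro h
    choose c hc using h
    set v := twistedC r σ ε y - y with hvdef
    -- a i = 2(y i - ρ i), an odd integer
    set a : Fin r → ℤ := fun i => 2 * zy i - 2 * (r : ℤ) + 2 * ((i : ℕ) : ℤ) + 1 with hadef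
    have hodd : ∀ i, Odd (a i) := by
      intro i
      exact ⟨zy i - (r : ℤ) + ((i : ℕ) : ℤ), by simp [hadef]; ring⟩
    have hkey0 : ∀ i, (if ε i then (-1 : ℚ) else 1) * (y (σ.symm i) - rhoCheckC r (σ.symm i))
        + rhoCheckC r i - y i = (m : ℚ) * c i := by
      intro i
      have := hc i
      simpa [hvdef, twistedC, signedPerm, Pi.add_apply, Pi.sub_apply] using this
    have hZrel : ∀ i, ((if ε i then (-1 : ℤ) else 1) * a (σ.symm i) - a i) = 2 * m * c i := by
      intro i
      have h0 := hkey0 i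
      rw [hzy i, hzy (σ.symm i)] at h0
      have hcast : ((((if ε i then (-1 : ℤ) else 1) * a (σ.symm i) - a i : ℤ)) : ℚ)
          = ((2 * (m : ℤ) * c i : ℤ) : ℚ) := by
        simp only [rhoCheckC] at h0
        simp only [hadef]
        split_ifs at h0 ⊢ <;> push_cast <;> push_cast at h0 <;> linarith [h0]
      exact_mod_cast hcast
    have h4 : (4 : ℤ) ∣ 2 * (m : ℤ) := by
      obtain ⟨k, hk⟩ := hmeven
      exact ⟨(k : ℤ), by omega⟩
    have hrelN : ∀ i, (2 * (m : ℤ)) ∣ ((if ε i then (-1 : ℤ) else 1) * a (σ⁻¹ i) - a i) := by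
      intro i
      refine ⟨c i, ?_⟩
      rw [show σ⁻¹ i = σ.symm i from rfl]
      exact hZrel i
    have hdvd := keyLemma (2 * (m : ℤ)) h4 σ
      (Finset.univ.filter (fun i => ε i = true)).card ε a rfl hodd hrelN
    obtain ⟨d', hd'⟩ := hdvd
    -- sum manipulation
    have e_point : ∀ i : Fin r, (if ε i then (-1 : ℤ) else 1) * a (σ.symm i) - a i
        = (a (σ.symm i) - a i) - 2 * (if ε i then a (σ.symm i) else 0) := by
      intro i
      split_ifs <;> ring
    have sum1 : ∑ i, a (σ.symm i) = ∑ i, a i := Equiv.sum_comp σ.symm a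
    have sum2 : ∑ i, (if ε i then a (σ.symm i) else 0)
        = ∑ i ∈ Finset.univ.filter (fun i => ε i = true), a (σ.symm i) :=
      (Finset.sum_filter _ _).symm
    have sum3 : ∑ i ∈ Finset.univ.filter (fun i => ε i = true), a (σ.symm i)
        = ∑ i ∈ Finset.univ.filter (fun i => ε i = true), a (σ⁻¹ i) := rfl
    have hsumc : 2 * (m : ℤ) * (∑ i, c i) = 2 * (m : ℤ) * (2 * (-d')) := by
      have e1 : ∑ i, ((if ε i then (-1 : ℤ) else 1) * a (σ.symm i) - a i)
          = 2 * (m : ℤ) * (∑ i, c i) := by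
        rw [Finset.mul_sum]
        exact Finset.sum_congr rfl (fun i _ => (hZrel i))
      have e2 : ∑ i, ((if ε i then (-1 : ℤ) else 1) * a (σ.symm i) - a i)
          = -2 * (∑ i ∈ Finset.univ.filter (fun i => ε i = true), a (σ⁻¹ i)) := by
        rw [Finset.sum_congr rfl (fun i _ => e_point i), Finset.sum_sub_distrib,
          Finset.sum_sub_distrib, sum1, ← Finset.mul_sum, sum2, sum3]
        ring
      rw [← e1, e2, hd']
      ring
    have hm0 : (2 * (m : ℤ)) ≠ 0 := by positivity
    have hsumc' : (∑ i, c i) = 2 * (-d') := mul_left_cancel₀ hm0 hsumc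
    exact cond_le_sc r m hr ⟨c, hc, -d', hsumc'⟩
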